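/- In the decentralized finite-sum setting with the D-GET algorithm, suppose there is ε₂ ≥ 0 such that for every r ≥ 0 with q dividing r, E‖v^r − G(x^r)‖² ≤ ε₂. Then for every r ≥ 0: ∑_{t=0}^{r} E‖v^{t+1} − v^t‖² ≤ 24L²(2∑_{t=0}^{r} E‖x^t − 𝟙x̄^t‖² + α²∑_{t=0}^{r} E‖y^t − 𝟙ȳ^t‖² + α²∑_{t=0}^{r} E‖𝟙ȳ^t‖²) + 6(r+1)ε₂. -/

import Mathlib

open Finset MeasureTheory ProbabilityTheory

noncomputable section

/-- Euclidean space `ℝ^d`. -/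
abbrev Vec (d : ℕ) := EuclideanSpace ℝ (Fin d)

/-- Stacked space `(ℝ^d)^m` with the Euclidean (ℓ²) norm. -/
abbrev Stack (m d : ℕ) := PiLp 2 (fun _ : Fin m => Vec d)

/-- Blockwise action of an `m × m` matrix on `(ℝ^d)^m`. -/
def Wact {m d : ℕ} (W : Matrix (Fin m) (Fin m) ℝ) (x : Stack m d) : Stack m d :=
  WithLp.toLp 2 (fun i => ∑ k, W i k • x k)

/-- Matrix-vector product, valued in Euclidean space. -/
def mulVecE {m : ℕ} (W : Matrix (Fin m) (Fin m) ℝ) (u : Vec m) : Vec m :=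
  WithLp.toLp 2 (fun i => ∑ k, W i k * u k)

/-- Block average `x̄ = (1/m) ∑ᵢ xᵢ`. -/
def blockAvg {m d : ℕ} (x : Stack m d) : Vec d := (m : ℝ)⁻¹ • ∑ i, x i

/-- The stacked vector `𝟙 u` all of whose `m` blocks equal `u`. -/
def oneVec {m d : ℕ} (u : Vec d) : Stack m d := WithLp.toLp 2 (fun _ => u)

/-- Local cost of node `i` in the finite-sum setting: `fᶦ = (1/n) ∑ⱼ fᶦⱼ`. -/
def fLoc {m d n : ℕ} (f : Fin m → Fin n → Vec d → ℝ) (i : Fin m) : Vec d → ℝ :=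
  fun w => (n : ℝ)⁻¹ * ∑ j, f i j w

/-- Global cost `f = (1/m) ∑ᵢ fᶦ`. -/
def fTot {m d n : ℕ} (f : Fin m → Fin n → Vec d → ℝ) : Vec d → ℝ :=
  fun w => (m : ℝ)⁻¹ * ∑ i, fLoc f i w

/-- Stacked gradient `G(x) = (∇f¹(x₁),…,∇fᵐ(x_m))`. -/
def Gmap {m d n : ℕ} (f : Fin m → Fin n → Vec d → ℝ) (x : Stack m d) : Stack m d :=
  WithLp.toLp 2 (fun i => gradient (fLoc f i) (x i))

/-- Network-average gradient `(1/m) ∑ᵢ ∇fᶦ(xᵢ)`. -/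
def avgGrad {m d n : ℕ} (f : Fin m → Fin n → Vec d → ℝ) (x : Stack m d) : Vec d :=
  (m : ℝ)⁻¹ • ∑ i, gradient (fLoc f i) (x i)


set_option linter.unusedSectionVars false
set_option maxHeartbeats 2000000

section Aux
variable {E : Type*} [NormedAddCommGroup E] [InnerProductSpace ℝ E]

local notation "⟪" x ", " y "⟫" => @inner ℝ _ _ x y

lemma aux_three (a b c : E) : ‖a + b + c‖^2 ≤ 3*‖a‖^2 + 3*‖b‖^2 + 3*‖c‖^2 := by
  have h1 : ‖a + b + c‖ ≤ ‖a‖ + ‖b‖ + ‖c‖ := norm_add₃_le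
  nlinarith [norm_nonneg (a+b+c), norm_nonneg a, norm_nonneg b, norm_nonneg c,
    sq_nonneg (‖a‖-‖b‖), sq_nonneg (‖a‖-‖c‖), sq_nonneg (‖b‖-‖c‖)]

lemma aux_two (a b : E) : ‖a + b‖^2 ≤ 2*‖a‖^2 + 2*‖b‖^2 := by
  have h1 : ‖a + b‖ ≤ ‖a‖ + ‖b‖ := norm_add_le a b
  nlinarith [norm_nonneg (a+b), norm_nonneg a, norm_nonneg b, sq_nonneg (‖a‖-‖b‖)]

lemma aux_avg_sq {k : ℕ} (u : Fin k → E) :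
    ‖(k:ℝ)⁻¹ • ∑ b, u b‖^2 ≤ (k:ℝ)⁻¹ * ∑ b, ‖u b‖^2 := by
  rcases Nat.eq_zero_or_pos k with hk | hk
  · subst hk; simp
  have hk' : (0:ℝ) < k := by exact_mod_cast hk
  have h1 : ‖∑ b, u b‖ ≤ ∑ b, ‖u b‖ := norm_sum_le _ _
  have h2 : (∑ b, ‖u b‖)^2 ≤ (k:ℝ) * ∑ b, ‖u b‖^2 := by
    have := sq_sum_le_card_mul_sum_sq (s := (Finset.univ : Finset (Fin k)))
      (f := fun b => ‖u b‖)
    simpa using this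
  have h3 : ‖∑ b, u b‖^2 ≤ (k:ℝ) * ∑ b, ‖u b‖^2 := by
    have := pow_le_pow_left₀ (norm_nonneg _) h1 2
    linarith
  rw [norm_smul]
  have : ‖(k:ℝ)⁻¹‖ = (k:ℝ)⁻¹ := by
    rw [Real.norm_eq_abs, abs_of_nonneg (by positivity)]
  rw [this, mul_pow]
  calc ((k:ℝ)⁻¹)^2 * ‖∑ b, u b‖^2 ≤ ((k:ℝ)⁻¹)^2 * ((k:ℝ) * ∑ b, ‖u b‖^2) := by
        apply mul_le_mul_of_nonneg_left h3 (by positivity)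
    _ = (k:ℝ)⁻¹ * ∑ b, ‖u b‖^2 := by field_simp

lemma aux_var {k : ℕ} (hk : 0 < k) (g : Fin k → E) (c : ℝ)
    (hc : ∀ j, ‖g j‖ ≤ c) :
    (k:ℝ)⁻¹ * ∑ j, ‖g j - (k:ℝ)⁻¹ • ∑ j', g j'‖^2 ≤ c^2 := by
  have hk' : (0:ℝ) < k := by exact_mod_cast hk
  set gb : E := (k:ℝ)⁻¹ • ∑ j', g j' with hgb
  have hsum : ∑ j', g j' = (k:ℝ) • gb := by
    rw [hgb, smul_smul, mul_inv_cancel₀ (ne_of_gt hk'), one_smul]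
  have hexp : ∀ j, ‖g j - gb‖^2 = ‖g j‖^2 - 2*⟪g j, gb⟫ + ‖gb‖^2 := by
    intro j
    rw [norm_sub_sq_real]
  have hsum2 : ∑ j, ‖g j - gb‖^2 = (∑ j, ‖g j‖^2) - (k:ℝ)*‖gb‖^2 := by
    rw [Finset.sum_congr rfl (fun j _ => hexp j)]
    rw [Finset.sum_add_distrib, Finset.sum_sub_distrib]
    rw [← Finset.mul_sum, ← sum_inner, hsum, real_inner_smul_left,
      real_inner_self_eq_norm_sq]
    simp only [Finset.sum_const, Finset.card_univ, Fintype.card_fin, nsmul_eq_mul]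
    ring
  have hbd : ∑ j, ‖g j‖^2 ≤ (k:ℝ) * c^2 := by
    have : ∀ j ∈ (Finset.univ : Finset (Fin k)), ‖g j‖^2 ≤ c^2 := by
      intro j _
      have h0 := norm_nonneg (g j)
      nlinarith [hc j]
    calc ∑ j, ‖g j‖^2 ≤ ∑ _j : Fin k, c^2 := Finset.sum_le_sum this
      _ = (k:ℝ) * c^2 := by
          simp only [Finset.sum_const, Finset.card_univ, Fintype.card_fin, nsmul_eq_mul]
  rw [hsum2]
  have hnn : 0 ≤ (k:ℝ)*‖gb‖^2 := by positivity
  rw [inv_mul_le_iff₀ hk']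
  nlinarith

lemma aux_center {k : ℕ} (hk : 0 < k) (a : E) (c : Fin k → E) :
    (k:ℝ)⁻¹ * ∑ j, ⟪a, c j - (k:ℝ)⁻¹ • ∑ j', c j'⟫ = 0 := by
  have hk' : (0:ℝ) < k := by exact_mod_cast hk
  have h1 : ∑ j, ⟪a, c j - (k:ℝ)⁻¹ • ∑ j', c j'⟫
      = ⟪a, ∑ j, (c j - (k:ℝ)⁻¹ • ∑ j', c j')⟫ := (inner_sum _ _ _).symm
  have h2 : ∑ j, (c j - (k:ℝ)⁻¹ • ∑ j', c j') = 0 := by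
    rw [Finset.sum_sub_distrib]
    have : (∑ _j : Fin k, (k:ℝ)⁻¹ • ∑ j', c j') = (k:ℝ) • ((k:ℝ)⁻¹ • ∑ j', c j') := by
      simp [Finset.card_univ, ← Nat.cast_smul_eq_nsmul ℝ]
    rw [this, smul_smul, mul_inv_cancel₀ (ne_of_gt hk'), one_smul, sub_self]
  rw [h1, h2, inner_zero_right, mul_zero]

end Aux

section Det
variable {m d n : ℕ}

lemma gradLoc_eq (f : Fin m → Fin n → Vec d → ℝ)
    (hdiff : ∀ i j, Differentiable ℝ (f i j)) (i : Fin m) (w : Vec d) :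
    gradient (fLoc f i) w = (n:ℝ)⁻¹ • ∑ j, gradient (f i j) w := by
  have hsum : DifferentiableAt ℝ (fun w => ∑ j, f i j w) w :=
    DifferentiableAt.fun_sum (fun j _ => (hdiff i j).differentiableAt)
  have h1 : fderiv ℝ (fLoc f i) w = (n:ℝ)⁻¹ • ∑ j, fderiv ℝ (f i j) w := by
    have : fLoc f i = fun w => (n:ℝ)⁻¹ * ∑ j, f i j w := rfl
    rw [this, fderiv_const_mul hsum,
      fderiv_fun_sum (fun j _ => (hdiff i j).differentiableAt)]
  show (InnerProductSpace.toDual ℝ (Vec d)).symm (fderiv ℝ (fLoc f i) w) = _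
  rw [h1, _root_.map_smul, map_sum]
  rfl

lemma gradLoc_lip (f : Fin m → Fin n → Vec d → ℝ) (hn : 0 < n) (L : ℝ)
    (hdiff : ∀ i j, Differentiable ℝ (f i j))
    (hlip : ∀ i j (u u' : Vec d),
      ‖gradient (f i j) u - gradient (f i j) u'‖ ≤ L * ‖u - u'‖)
    (i : Fin m) (u u' : Vec d) :
    ‖gradient (fLoc f i) u - gradient (fLoc f i) u'‖ ≤ L * ‖u - u'‖ := by
  rw [gradLoc_eq f hdiff, gradLoc_eq f hdiff, ← smul_sub, ← Finset.sum_sub_distrib]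
  rw [norm_smul, Real.norm_eq_abs, abs_of_nonneg (by positivity)]
  have h1 : ‖∑ j, (gradient (f i j) u - gradient (f i j) u')‖ ≤ (n:ℝ) * (L * ‖u - u'‖) := by
    calc ‖∑ j, (gradient (f i j) u - gradient (f i j) u')‖
        ≤ ∑ j, ‖gradient (f i j) u - gradient (f i j) u'‖ := norm_sum_le _ _
      _ ≤ ∑ _j : Fin n, L * ‖u - u'‖ := Finset.sum_le_sum (fun j _ => hlip i j u u')
      _ = (n:ℝ) * (L * ‖u - u'‖) := by
          simp only [Finset.sum_const, Finset.card_univ, Fintype.card_fin, nsmul_eq_mul]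
  have hn' : (0:ℝ) < n := by exact_mod_cast hn
  calc (n:ℝ)⁻¹ * ‖∑ j, (gradient (f i j) u - gradient (f i j) u')‖
      ≤ (n:ℝ)⁻¹ * ((n:ℝ) * (L * ‖u - u'‖)) := by
        apply mul_le_mul_of_nonneg_left h1 (by positivity)
    _ = L * ‖u - u'‖ := by field_simp

lemma stack_norm_sq (z : Stack m d) : ‖z‖^2 = ∑ i, ‖z i‖^2 :=
  PiLp.norm_sq_eq_of_L2 _ z

lemma vec_norm_sq (w : Vec d) : ‖w‖^2 = ∑ l, (w l)^2 := by
  rw [PiLp.norm_sq_eq_of_L2]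
  congr 1; funext l; rw [Real.norm_eq_abs, sq_abs]

-- W facts
variable (W : Matrix (Fin m) (Fin m) ℝ)

lemma Wact_add (x z : Stack m d) : Wact W (x + z) = Wact W x + Wact W z := by
  refine PiLp.ext (fun i => ?_)
  show ∑ k, W i k • (x k + z k) = (∑ k, W i k • x k) + ∑ k, W i k • z k
  rw [← Finset.sum_add_distrib]
  congr 1; funext k; rw [smul_add]

lemma Wact_one (hW1 : W.mulVec (fun _ => (1 : ℝ)) = fun _ => (1 : ℝ)) (u : Vec d) :
    Wact W (oneVec u) = oneVec u := by
  refine PiLp.ext (fun i => ?_)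
  show ∑ k, W i k • u = u
  rw [← Finset.sum_smul]
  have : ∑ k, W i k = 1 := by
    have := congrFun hW1 i
    simpa [Matrix.mulVec, dotProduct] using this
  rw [this, one_smul]

lemma Wact_contract (η : ℝ) (hη0 : 0 ≤ η)
    (hWcontract : ∀ u : Vec m, (∑ k, u k) = 0 → ‖mulVecE W u‖ ≤ η * ‖u‖)
    (z : Stack m d) (hz : (∑ i, z i) = (0 : Vec d)) :
    ‖Wact W z‖ ≤ η * ‖z‖ := by
  set u : Fin d → Vec m := fun l => WithLp.toLp 2 (fun i => z i l) with hu
  have hsq : ‖Wact W z‖^2 ≤ η^2 * ‖z‖^2 := by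
    have hcol : ∀ l : Fin d, (∑ i, u l i) = 0 := by
      intro l
      have := congrArg (fun w : Vec d => w l) hz
      simp only [WithLp.ofLp_sum, Finset.sum_apply, PiLp.zero_apply] at this
      exact this
    have hWl : ∀ l : Fin d, ‖mulVecE W (u l)‖^2 ≤ η^2 * ‖u l‖^2 := by
      intro l
      have h := hWcontract (u l) (hcol l)
      have h2 := pow_le_pow_left₀ (norm_nonneg (mulVecE W (u l))) h 2
      calc ‖mulVecE W (u l)‖^2 ≤ (η * ‖u l‖)^2 := h2
        _ = η^2 * ‖u l‖^2 := by ring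
    have hkey : ∀ (i : Fin m) (l : Fin d), Wact W z i l = mulVecE W (u l) i := by
      intro i l
      show (∑ k, W i k • z k) l = ∑ k, W i k * z k l
      rw [WithLp.ofLp_sum, Finset.sum_apply]
      rfl
    calc ‖Wact W z‖^2 = ∑ i, ‖Wact W z i‖^2 := stack_norm_sq _
      _ = ∑ i, ∑ l, (Wact W z i l)^2 := Finset.sum_congr rfl (fun i _ => vec_norm_sq _)
      _ = ∑ l, ∑ i, (Wact W z i l)^2 := Finset.sum_comm
      _ = ∑ l, ‖mulVecE W (u l)‖^2 := by
          refine Finset.sum_congr rfl (fun l _ => ?_)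
          rw [vec_norm_sq]
          exact Finset.sum_congr rfl (fun i _ => by rw [hkey])
      _ ≤ ∑ l, η^2 * ‖u l‖^2 := Finset.sum_le_sum (fun l _ => hWl l)
      _ = η^2 * ∑ l, ∑ i, (u l i)^2 := by
          rw [← Finset.mul_sum]
          exact congrArg _ (Finset.sum_congr rfl (fun l _ => vec_norm_sq _))
      _ = η^2 * ‖z‖^2 := by
          congr 1
          rw [stack_norm_sq, Finset.sum_comm]
          exact Finset.sum_congr rfl (fun i _ => (vec_norm_sq _).symm)
  have h0 : (0:ℝ) ≤ η * ‖z‖ := by positivity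
  nlinarith [norm_nonneg (Wact W z), norm_nonneg z, sq_nonneg (‖Wact W z‖ + η * ‖z‖)]

end Det

section Delta
variable {m d : ℕ}

lemma sum_sub_blockAvg (hm : 0 < m) (xx : Stack m d) :
    (∑ i, (xx i - blockAvg xx)) = (0 : Vec d) := by
  have hm' : (0:ℝ) < m := by exact_mod_cast hm
  rw [Finset.sum_sub_distrib]
  have h2 : (∑ _i : Fin m, blockAvg xx) = (m:ℝ) • blockAvg xx := by
    simp [Finset.card_univ, ← Nat.cast_smul_eq_nsmul ℝ]
  rw [h2]
  show (∑ i, xx i) - (m:ℝ) • ((m:ℝ)⁻¹ • ∑ i, xx i) = 0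
  rw [smul_smul, mul_inv_cancel₀ (ne_of_gt hm'), one_smul, sub_self]

lemma delta_bound (W : Matrix (Fin m) (Fin m) ℝ) (η α : ℝ)
    (hη0 : 0 ≤ η) (hη1 : η < 1) (hα : 0 < α) (hm : 0 < m)
    (hW1 : W.mulVec (fun _ => (1 : ℝ)) = fun _ => (1 : ℝ))
    (hWcontract : ∀ u : Vec m, (∑ k, u k) = 0 → ‖mulVecE W u‖ ≤ η * ‖u‖)
    (xx yy : Stack m d) :
    ‖(Wact W xx - α • yy) - xx‖^2 ≤
      12*‖xx - oneVec (blockAvg xx)‖^2 + 3*α^2*‖yy - oneVec (blockAvg yy)‖^2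
        + 3*α^2*‖(oneVec (blockAvg yy) : Stack m d)‖^2 := by
  set z := xx - oneVec (blockAvg xx) with hz
  set zy := yy - oneVec (blockAvg yy) with hzy
  set w : Stack m d := oneVec (blockAvg yy) with hw
  have hxx : xx = z + oneVec (blockAvg xx) := by rw [hz]; abel
  have hyy : yy = zy + w := by rw [hzy]; abel
  have hsz : (∑ i, z i) = (0 : Vec d) := by
    have : ∀ i, z i = xx i - blockAvg xx := fun i => rfl
    rw [Finset.sum_congr rfl (fun i _ => this i)]
    exact sum_sub_blockAvg hm xx
  have hid : (Wact W xx - α • yy) - xx = (Wact W z - z) + (-(α • zy)) + (-(α • w)) := by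
    conv_lhs => rw [hxx, hyy]
    rw [Wact_add, Wact_one W hW1]
    rw [smul_add]
    abel
  have hcz : ‖Wact W z - z‖ ≤ 2 * ‖z‖ := by
    have h1 : ‖Wact W z‖ ≤ η * ‖z‖ := Wact_contract W η hη0 hWcontract z hsz
    have h2 : ‖Wact W z - z‖ ≤ ‖Wact W z‖ + ‖z‖ := norm_sub_le _ _
    nlinarith [norm_nonneg z]
  have h3 := aux_three (Wact W z - z) (-(α • zy)) (-(α • w))
  rw [hid]
  have e1 : ‖(-(α • zy) : Stack m d)‖ = α * ‖zy‖ := by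
    rw [norm_neg, norm_smul, Real.norm_eq_abs, abs_of_pos hα]
  have e2 : ‖(-(α • w) : Stack m d)‖ = α * ‖w‖ := by
    rw [norm_neg, norm_smul, Real.norm_eq_abs, abs_of_pos hα]
  have h4 : ‖Wact W z - z‖^2 ≤ 4 * ‖z‖^2 := by nlinarith [norm_nonneg (Wact W z - z)]
  rw [e1, e2] at h3
  nlinarith [h3]

end Delta


section Prob

lemma integrable_of_finite_range {Ω γ : Type*} [MeasurableSpace Ω] [Fintype γ] [Nonempty γ]
    [MeasurableSpace γ] [MeasurableSingletonClass γ]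
    (μ : MeasureTheory.Measure Ω) [MeasureTheory.IsProbabilityMeasure μ]
    (g : Ω → γ) (hg : Measurable g) (ψ : γ → ℝ) :
    MeasureTheory.Integrable (fun ω => ψ (g ω)) μ := by
  have hmeas : Measurable (fun ω => ψ (g ω)) := (measurable_of_finite ψ).comp hg
  set C := Finset.univ.sup' Finset.univ_nonempty (fun c : γ => |ψ c|) with hC
  refine MeasureTheory.Integrable.mono' (MeasureTheory.integrable_const C)
    hmeas.aestronglyMeasurable (Filter.Eventually.of_forall (fun ω => ?_))
  rw [Real.norm_eq_abs]
  exact Finset.le_sup' (fun c : γ => |ψ c|) (Finset.mem_univ (g ω))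

/-- Index set of all sampling indices up to time `t`. -/
def pIdx (S2 m : ℕ) (t : ℕ) : Finset (ℕ × Fin S2 × Fin m) :=
  Finset.range (t+1) ×ˢ Finset.univ

variable {m n S2 : ℕ} {Ω : Type} [MeasurableSpace Ω] (μ : MeasureTheory.Measure Ω)
  [MeasureTheory.IsProbabilityMeasure μ]
  (J : ℕ → Fin S2 → Fin m → Ω → Fin n)

/-- The tuple of samples up to time `t`. -/
def tupJ (t : ℕ) (ω : Ω) : {p // p ∈ pIdx S2 m t} → Fin n :=
  fun p => J p.1.1 p.1.2.1 p.1.2.2 ω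

lemma measurable_tupJ (hJmeas : ∀ r b i, Measurable (J r b i)) (t : ℕ) :
    Measurable (tupJ J t) :=
  measurable_pi_lambda _ (fun p => hJmeas _ _ _)

lemma integrable_switch (hn : 0 < n)
    (hJmeas : ∀ r b i, Measurable (J r b i))
    (t : ℕ) (b : Fin S2) (i : Fin m) (g : Fin n → ({p // p ∈ pIdx S2 m t} → Fin n) → ℝ) :
    MeasureTheory.Integrable (fun ω => g (J (t+1) b i ω) (tupJ J t ω)) μ := by
  haveI : Nonempty (Fin n) := ⟨⟨0, hn⟩⟩
  exact integrable_of_finite_range μ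
    (fun ω => ((J (t+1) b i ω, tupJ J t ω) : Fin n × ({p // p ∈ pIdx S2 m t} → Fin n)))
    ((hJmeas _ _ _).prodMk (measurable_tupJ J hJmeas t))
    (fun c => g c.1 c.2)

lemma switch_lemma (hn : 0 < n)
    (hJmeas : ∀ r b i, Measurable (J r b i))
    (hJunif : ∀ r b i j, μ {ω | J r b i ω = j} = (n : ENNReal)⁻¹)
    (hJindep : ProbabilityTheory.iIndepFun
      (fun p : ℕ × Fin S2 × Fin m => J p.1 p.2.1 p.2.2) μ)
    (t : ℕ) (b : Fin S2) (i : Fin m) (g : Fin n → ({p // p ∈ pIdx S2 m t} → Fin n) → ℝ) :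
    ∫ ω, g (J (t+1) b i ω) (tupJ J t ω) ∂μ
      = ∫ ω, (n:ℝ)⁻¹ * ∑ j, g j (tupJ J t ω) ∂μ := by
  classical
  haveI : Nonempty (Fin n) := ⟨⟨0, hn⟩⟩
  set pt : ℕ × Fin S2 × Fin m := (t+1, b, i) with hpt
  have hdisj : Disjoint (pIdx S2 m t) ({pt} : Finset (ℕ × Fin S2 × Fin m)) := by
    rw [Finset.disjoint_singleton_right]
    intro hmem
    rw [pIdx, Finset.mem_product, Finset.mem_range] at hmem
    exact lt_irrefl _ hmem.1
  have hindep0 := hJindep.indepFun_finset (pIdx S2 m t) {pt} hdisj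
    (fun p => hJmeas _ _ _)
  -- per j facts
  have hXY : ∀ j : Fin n,
      ∫ ω, (if J (t+1) b i ω = j then (1:ℝ) else 0) * g j (tupJ J t ω) ∂μ
        = (n:ℝ)⁻¹ * ∫ ω, g j (tupJ J t ω) ∂μ := by
    intro j
    have hmempt : pt ∈ ({pt} : Finset (ℕ × Fin S2 × Fin m)) := Finset.mem_singleton_self pt
    have hind : ProbabilityTheory.IndepFun
        (fun ω => (if J (t+1) b i ω = j then (1:ℝ) else 0))
        (fun ω => g j (tupJ J t ω)) μ := by
      have hcomp := hindep0.comp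
        (φ := fun h : ({p // p ∈ pIdx S2 m t} → Fin n) => g j h)
        (ψ := fun h : ({p // p ∈ ({pt} : Finset (ℕ × Fin S2 × Fin m))} → Fin n) =>
          (if h ⟨pt, hmempt⟩ = j then (1:ℝ) else 0))
        (measurable_of_finite _) (measurable_of_finite _)
      exact hcomp.symm
    have h1 := hind.integral_mul_eq_mul_integral
      (integrable_of_finite_range μ (J (t+1) b i) (hJmeas _ _ _)
        (fun c => if c = j then (1:ℝ) else 0)).aestronglyMeasurable
      (integrable_of_finite_range μ (tupJ J t) (measurable_tupJ J hJmeas t) (g j)).aestronglyMeasurable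
    have h2 : ∫ ω, (if J (t+1) b i ω = j then (1:ℝ) else 0) ∂μ = (n:ℝ)⁻¹ := by
      have hset : (fun ω => (if J (t+1) b i ω = j then (1:ℝ) else 0))
          = Set.indicator ((J (t+1) b i) ⁻¹' {j}) (fun _ => (1:ℝ)) := by
        funext ω
        by_cases h : J (t+1) b i ω = j <;>
          simp [h, Set.indicator_apply, Set.mem_preimage]
      rw [hset, MeasureTheory.integral_indicator_const _
        ((hJmeas _ _ _) (measurableSet_singleton j))]
      have : (J (t+1) b i) ⁻¹' {j} = {ω | J (t+1) b i ω = j} := rfl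
      rw [this, measureReal_def, hJunif]
      simp [ENNReal.toReal_inv]
    calc ∫ ω, (if J (t+1) b i ω = j then (1:ℝ) else 0) * g j (tupJ J t ω) ∂μ
        = (∫ ω, (if J (t+1) b i ω = j then (1:ℝ) else 0) ∂μ) * ∫ ω, g j (tupJ J t ω) ∂μ := h1
      _ = (n:ℝ)⁻¹ * ∫ ω, g j (tupJ J t ω) ∂μ := by rw [h2]
  have hpt1 : ∀ ω, g (J (t+1) b i ω) (tupJ J t ω)
      = ∑ j, (if J (t+1) b i ω = j then (1:ℝ) else 0) * g j (tupJ J t ω) := by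
    intro ω
    rw [Finset.sum_congr rfl (fun j _ => by
      rw [ite_mul, one_mul, zero_mul])]
    rw [Finset.sum_ite_eq]
    simp
  calc ∫ ω, g (J (t+1) b i ω) (tupJ J t ω) ∂μ
      = ∫ ω, ∑ j, (if J (t+1) b i ω = j then (1:ℝ) else 0) * g j (tupJ J t ω) ∂μ := by
        exact MeasureTheory.integral_congr_ae (Filter.Eventually.of_forall hpt1)
    _ = ∑ j, ∫ ω, (if J (t+1) b i ω = j then (1:ℝ) else 0) * g j (tupJ J t ω) ∂μ := by
        refine MeasureTheory.integral_finset_sum _ (fun j _ => ?_)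
        exact integrable_switch μ J hn hJmeas t b i
          (fun c h => (if c = j then (1:ℝ) else 0) * g j h)
    _ = ∑ j, (n:ℝ)⁻¹ * ∫ ω, g j (tupJ J t ω) ∂μ := Finset.sum_congr rfl (fun j _ => hXY j)
    _ = (n:ℝ)⁻¹ * ∑ j, ∫ ω, g j (tupJ J t ω) ∂μ := by rw [Finset.mul_sum]
    _ = (n:ℝ)⁻¹ * ∫ ω, ∑ j, g j (tupJ J t ω) ∂μ := by
        rw [MeasureTheory.integral_finset_sum _ (fun j _ =>
          integrable_of_finite_range μ (tupJ J t) (measurable_tupJ J hJmeas t) (g j))]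
    _ = ∫ ω, (n:ℝ)⁻¹ * ∑ j, g j (tupJ J t ω) ∂μ := by
        rw [MeasureTheory.integral_const_mul]

end Prob

/-- bound on the accumulated successive differences of the local gradient
estimates, assuming the estimation error at every outer iteration (`q ∣ r`) is at most `ε₂`. -/
theorem stmt12
    (m d n q S2 : ℕ) (hm : 0 < m) (hn : 0 < n) (hq : 1 ≤ q) (hS2 : 0 < S2)
    (L η α : ℝ) (hL : 0 ≤ L) (hη0 : 0 ≤ η) (hη1 : η < 1) (hα : 0 < α)
    (f : Fin m → Fin n → Vec d → ℝ)
    (hdiff : ∀ i j, Differentiable ℝ (f i j))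
    (hlip : ∀ i j (u u' : Vec d),
      ‖gradient (f i j) u - gradient (f i j) u'‖ ≤ L * ‖u - u'‖)
    (W : Matrix (Fin m) (Fin m) ℝ) (hWsymm : W.IsSymm)
    (hW1 : W.mulVec (fun _ => (1 : ℝ)) = fun _ => (1 : ℝ))
    (hWcontract : ∀ u : Vec m, (∑ k, u k) = 0 → ‖mulVecE W u‖ ≤ η * ‖u‖)
    (Ω : Type) [MeasurableSpace Ω] (μ : Measure Ω) [IsProbabilityMeasure μ]
    (J : ℕ → Fin S2 → Fin m → Ω → Fin n)
    (hJmeas : ∀ r b i, Measurable (J r b i))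
    (hJunif : ∀ r b i j, μ {ω | J r b i ω = j} = (n : ENNReal)⁻¹)
    (hJindep : iIndepFun
      (fun p : ℕ × Fin S2 × Fin m => J p.1 p.2.1 p.2.2) μ)
    (x0 : Stack m d) (x v y : ℕ → Ω → Stack m d)
    (hx0 : ∀ ω, x 0 ω = x0)
    (hy0 : ∀ ω, y 0 ω = v 0 ω)
    (hxrec : ∀ r ω, x (r + 1) ω = Wact W (x r ω) - α • y r ω)
    (hvfull : ∀ r, q ∣ r → ∀ ω, v r ω = Gmap f (x r ω))
    (hvest : ∀ r, ¬ q ∣ (r + 1) → ∀ ω i, v (r + 1) ω i =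
      (S2 : ℝ)⁻¹ • ∑ b, (gradient (f i (J (r + 1) b i ω)) (x (r + 1) ω i)
        - gradient (f i (J (r + 1) b i ω)) (x r ω i)) + v r ω i)
    (hyrec : ∀ r ω, y (r + 1) ω = Wact W (y r ω) + v (r + 1) ω - v r ω)
    (ε₂ : ℝ) (hε₂0 : 0 ≤ ε₂)
    (hε₂ : ∀ r, q ∣ r → (∫ ω, ‖v r ω - Gmap f (x r ω)‖ ^ 2 ∂μ) ≤ ε₂) :
    ∀ r : ℕ,
      (∑ t ∈ Finset.range (r + 1), ∫ ω, ‖v (t + 1) ω - v t ω‖ ^ 2 ∂μ) ≤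
        24 * L ^ 2 *
          (2 * ∑ t ∈ Finset.range (r + 1), ∫ ω, ‖x t ω - oneVec (blockAvg (x t ω))‖ ^ 2 ∂μ
            + α ^ 2 * ∑ t ∈ Finset.range (r + 1), ∫ ω, ‖y t ω - oneVec (blockAvg (y t ω))‖ ^ 2 ∂μ
            + α ^ 2 * ∑ t ∈ Finset.range (r + 1),
                ∫ ω, ‖(oneVec (blockAvg (y t ω)) : Stack m d)‖ ^ 2 ∂μ)
        + 6 * (r + 1) * ε₂ := by
  classical
  intro r
  haveI hne : Nonempty (Fin n) := ⟨⟨0, hn⟩⟩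
  have hn' : (0:ℝ) < n := by exact_mod_cast hn
  have hS2' : (0:ℝ) < S2 := by exact_mod_cast hS2
  have hq0 : 0 < q := hq
  have hsub : ∀ t : ℕ, pIdx S2 m t ⊆ pIdx S2 m (t+1) := by
    intro t p hp
    rw [pIdx, Finset.mem_product] at hp ⊢
    refine ⟨Finset.mem_range.mpr ?_, hp.2⟩
    exact lt_trans (Finset.mem_range.mp hp.1) (Nat.lt_succ_self _)
  have hmemb : ∀ (t : ℕ) (b : Fin S2) (i : Fin m),
      ((t+1, b, i) : ℕ × Fin S2 × Fin m) ∈ pIdx S2 m (t+1) := by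
    intro t b i
    rw [pIdx, Finset.mem_product]
    exact ⟨Finset.mem_range.mpr (Nat.lt_succ_self _), Finset.mem_univ _⟩
  -- factorization of the process through the sample tuples
  have hfact : ∀ t : ℕ, ∃ F : ({p // p ∈ pIdx S2 m t} → Fin n) →
      (Stack m d × Stack m d × Stack m d),
      ∀ ω, (x t ω, v t ω, y t ω) = F (tupJ J t ω) := by
    intro t
    induction t with
    | zero =>
      refine ⟨fun _ => (x0, Gmap f x0, Gmap f x0), fun ω => ?_⟩
      rw [hy0 ω, hvfull 0 (dvd_zero q) ω, hx0 ω]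
    | succ t ih =>
      obtain ⟨F, hF⟩ := ih
      have hρ : ∀ ω, (fun p : {p // p ∈ pIdx S2 m t} =>
          tupJ J (t+1) ω ⟨p.1, hsub t p.2⟩) = tupJ J t ω := fun ω => rfl
      set Fx' : ({p // p ∈ pIdx S2 m (t+1)} → Fin n) → Stack m d :=
        fun h => Wact W ((F (fun p => h ⟨p.1, hsub t p.2⟩)).1)
          - α • (F (fun p => h ⟨p.1, hsub t p.2⟩)).2.2 with hFx'
      set Fv' : ({p // p ∈ pIdx S2 m (t+1)} → Fin n) → Stack m d :=
        fun h => if q ∣ (t+1) then Gmap f (Fx' h) else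
          WithLp.toLp 2 (fun i => (S2:ℝ)⁻¹ • ∑ b, (gradient (f i (h ⟨(t+1,b,i), hmemb t b i⟩)) (Fx' h i)
            - gradient (f i (h ⟨(t+1,b,i), hmemb t b i⟩))
              ((F (fun p => h ⟨p.1, hsub t p.2⟩)).1 i))
            + (F (fun p => h ⟨p.1, hsub t p.2⟩)).2.1 i) with hFv'
      refine ⟨fun h => (Fx' h, Fv' h,
        Wact W ((F (fun p => h ⟨p.1, hsub t p.2⟩)).2.2) + Fv' h
          - (F (fun p => h ⟨p.1, hsub t p.2⟩)).2.1), fun ω => ?_⟩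
      have hFx0 : x t ω = (F (tupJ J t ω)).1 := congrArg Prod.fst (hF ω)
      have hFv0 : v t ω = (F (tupJ J t ω)).2.1 := congrArg (fun z => z.2.1) (hF ω)
      have hFy0 : y t ω = (F (tupJ J t ω)).2.2 := congrArg (fun z => z.2.2) (hF ω)
      have hx1 : x (t+1) ω = Fx' (tupJ J (t+1) ω) := by
        show x (t+1) ω = Wact W ((F (fun p => tupJ J (t+1) ω ⟨p.1, hsub t p.2⟩)).1)
          - α • (F (fun p => tupJ J (t+1) ω ⟨p.1, hsub t p.2⟩)).2.2
        rw [hρ ω, hxrec t ω, hFx0, hFy0]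
      have hv1 : v (t+1) ω = Fv' (tupJ J (t+1) ω) := by
        by_cases hdv : q ∣ (t+1)
        · rw [hvfull (t+1) hdv ω]
          simp only [hFv', if_pos hdv]
          rw [hx1]
        · refine PiLp.ext (fun i => ?_)
          rw [hvest t hdv ω i]
          simp only [hFv', if_neg hdv]
          rw [hρ ω, ← hFx0, ← hFv0, ← hx1]
          rfl
      have hy1 : y (t+1) ω = Wact W ((F (fun p =>
          tupJ J (t+1) ω ⟨p.1, hsub t p.2⟩)).2.2) + Fv' (tupJ J (t+1) ω)
            - (F (fun p => tupJ J (t+1) ω ⟨p.1, hsub t p.2⟩)).2.1 := by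
        rw [hρ ω, hyrec t ω, ← hFy0, ← hFv0, ← hv1]
      rw [hx1, hv1, hy1]
  choose F hF using hfact
  have hFx : ∀ t ω, x t ω = (F t (tupJ J t ω)).1 := fun t ω => congrArg Prod.fst (hF t ω)
  have hFv : ∀ t ω, v t ω = (F t (tupJ J t ω)).2.1 := fun t ω => congrArg (fun z => z.2.1) (hF t ω)
  have hFy : ∀ t ω, y t ω = (F t (tupJ J t ω)).2.2 := fun t ω => congrArg (fun z => z.2.2) (hF t ω)
  -- integrability helpers
  have hIntFac : ∀ (t : ℕ) (ψ : ({p // p ∈ pIdx S2 m t} → Fin n) → ℝ),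
      Integrable (fun ω => ψ (tupJ J t ω)) μ :=
    fun t ψ => integrable_of_finite_range μ (tupJ J t) (measurable_tupJ J hJmeas t) ψ
  have hIntOf : ∀ (t : ℕ) (h : Ω → ℝ) (ψ : ({p // p ∈ pIdx S2 m t} → Fin n) → ℝ),
      (∀ ω, h ω = ψ (tupJ J t ω)) → Integrable h μ :=
    fun t h ψ hh => (hIntFac t ψ).congr (Filter.Eventually.of_forall fun ω => (hh ω).symm)
  -- abbreviations
  set DtI : ℕ → ℝ := fun t => ∫ ω, ‖x (t+1) ω - x t ω‖^2 ∂μ with hDtI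
  set ErI : ℕ → ℝ := fun t => ∫ ω, ‖v t ω - Gmap f (x t ω)‖^2 ∂μ with hErI
  set StI : ℕ → ℝ := fun t => ∫ ω, ‖v (t+1) ω - v t ω‖^2 ∂μ with hStI
  set XI : ℕ → ℝ := fun t => ∫ ω, ‖x t ω - oneVec (blockAvg (x t ω))‖^2 ∂μ with hXI
  set YI : ℕ → ℝ := fun t => ∫ ω, ‖y t ω - oneVec (blockAvg (y t ω))‖^2 ∂μ with hYI
  set ZI : ℕ → ℝ := fun t => ∫ ω, ‖(oneVec (blockAvg (y t ω)) : Stack m d)‖^2 ∂μ with hZI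
  have hIntDt : ∀ t, Integrable (fun ω => ‖x (t+1) ω - x t ω‖^2) μ := by
    intro t
    refine hIntOf t _ (fun h => ‖(Wact W ((F t h).1) - α • (F t h).2.2) - (F t h).1‖^2)
      (fun ω => ?_)
    rw [hxrec t ω, hFx t ω, hFy t ω]
  have hIntEr : ∀ t, Integrable (fun ω => ‖v t ω - Gmap f (x t ω)‖^2) μ := by
    intro t
    exact hIntOf t _ (fun h => ‖(F t h).2.1 - Gmap f ((F t h).1)‖^2)
      (fun ω => by rw [hFv t ω, hFx t ω])
  have hIntSt : ∀ t, Integrable (fun ω => ‖v (t+1) ω - v t ω‖^2) μ := by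
    intro t
    refine hIntOf (t+1) _ (fun h => ‖(F (t+1) h).2.1
      - (F t (fun p => h ⟨p.1, hsub t p.2⟩)).2.1‖^2) (fun ω => ?_)
    rw [hFv (t+1) ω, hFv t ω]
    rfl
  have hIntX : ∀ t, Integrable (fun ω => ‖x t ω - oneVec (blockAvg (x t ω))‖^2) μ := by
    intro t
    exact hIntOf t _ (fun h => ‖(F t h).1 - oneVec (blockAvg ((F t h).1))‖^2)
      (fun ω => by rw [hFx t ω])
  have hIntY : ∀ t, Integrable (fun ω => ‖y t ω - oneVec (blockAvg (y t ω))‖^2) μ := by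
    intro t
    exact hIntOf t _ (fun h => ‖(F t h).2.2 - oneVec (blockAvg ((F t h).2.2))‖^2)
      (fun ω => by rw [hFy t ω])
  have hIntZ : ∀ t, Integrable (fun ω => ‖(oneVec (blockAvg (y t ω)) : Stack m d)‖^2) μ := by
    intro t
    exact hIntOf t _ (fun h => ‖(oneVec (blockAvg ((F t h).2.2)) : Stack m d)‖^2)
      (fun ω => by rw [hFy t ω])
  have hDtnn : ∀ t, 0 ≤ DtI t := fun t => integral_nonneg (fun ω => by positivity)
  have hXnn : ∀ t, 0 ≤ XI t := fun t => integral_nonneg (fun ω => by positivity)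
  have hYnn : ∀ t, 0 ≤ YI t := fun t => integral_nonneg (fun ω => by positivity)
  have hZnn : ∀ t, 0 ≤ ZI t := fun t => integral_nonneg (fun ω => by positivity)
  have hstack_sq : ∀ (z w : Stack m d) (c : ℝ), 0 ≤ c → (∀ i, ‖z i‖ ≤ c * ‖w i‖) →
      ‖z‖^2 ≤ c^2 * ‖w‖^2 := by
    intro z w c hc hzw
    calc ‖z‖^2 = ∑ i, ‖z i‖^2 := stack_norm_sq _
      _ ≤ ∑ i, c^2 * ‖w i‖^2 := Finset.sum_le_sum (fun i _ => by
          have h2 := pow_le_pow_left₀ (norm_nonneg _) (hzw i) 2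
          calc ‖z i‖^2 ≤ (c*‖w i‖)^2 := h2
            _ = c^2*‖w i‖^2 := by ring)
      _ = c^2 * ∑ i, ‖w i‖^2 := by rw [Finset.mul_sum]
      _ = c^2 * ‖w‖^2 := by rw [← stack_norm_sq]
  -- (P1)
  have hEr0 : ∀ t, q ∣ t → ErI t = 0 := by
    intro t hdv
    rw [hErI]
    have : (fun ω => ‖v t ω - Gmap f (x t ω)‖^2) = fun _ => (0:ℝ) := by
      funext ω
      rw [hvfull t hdv ω, sub_self, norm_zero]
      norm_num
    show (∫ ω, ‖v t ω - Gmap f (x t ω)‖^2 ∂μ) = 0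
    rw [this, integral_zero]
  -- (P2)
  have hSt1 : ∀ t, ¬ q ∣ (t+1) → StI t ≤ L^2 * DtI t := by
    intro t hndvd
    have hpath : ∀ ω, ‖v (t+1) ω - v t ω‖^2 ≤ L^2 * ‖x (t+1) ω - x t ω‖^2 := by
      intro ω
      have hblock : ∀ i : Fin m, ‖v (t+1) ω i - v t ω i‖ ≤ L * ‖x (t+1) ω i - x t ω i‖ := by
        intro i
        have hv := hvest t hndvd ω i
        have hdd : v (t+1) ω i - v t ω i = (S2:ℝ)⁻¹ • ∑ b, (gradient (f i (J (t+1) b i ω)) (x (t+1) ω i)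
            - gradient (f i (J (t+1) b i ω)) (x t ω i)) := by
          rw [hv, add_sub_cancel_right]
        rw [hdd, norm_smul, Real.norm_eq_abs, abs_of_nonneg (by positivity)]
        have h1 : ‖∑ b, (gradient (f i (J (t+1) b i ω)) (x (t+1) ω i)
            - gradient (f i (J (t+1) b i ω)) (x t ω i))‖ ≤ (S2:ℝ) * (L * ‖x (t+1) ω i - x t ω i‖) := by
          calc ‖∑ b, (gradient (f i (J (t+1) b i ω)) (x (t+1) ω i)
              - gradient (f i (J (t+1) b i ω)) (x t ω i))‖
              ≤ ∑ b : Fin S2, ‖gradient (f i (J (t+1) b i ω)) (x (t+1) ω i)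
                - gradient (f i (J (t+1) b i ω)) (x t ω i)‖ := norm_sum_le _ _
            _ ≤ ∑ _b : Fin S2, L * ‖x (t+1) ω i - x t ω i‖ :=
                Finset.sum_le_sum (fun b _ => hlip i _ _ _)
            _ = (S2:ℝ) * (L * ‖x (t+1) ω i - x t ω i‖) := by
                simp only [Finset.sum_const, Finset.card_univ, Fintype.card_fin, nsmul_eq_mul]
        calc (S2:ℝ)⁻¹ * ‖∑ b, (gradient (f i (J (t+1) b i ω)) (x (t+1) ω i)
            - gradient (f i (J (t+1) b i ω)) (x t ω i))‖
            ≤ (S2:ℝ)⁻¹ * ((S2:ℝ) * (L * ‖x (t+1) ω i - x t ω i‖)) :=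
              mul_le_mul_of_nonneg_left h1 (by positivity)
          _ = L * ‖x (t+1) ω i - x t ω i‖ := by field_simp
      exact hstack_sq (v (t+1) ω - v t ω) (x (t+1) ω - x t ω) L hL hblock
    show (∫ ω, ‖v (t+1) ω - v t ω‖^2 ∂μ) ≤ L^2 * ∫ ω, ‖x (t+1) ω - x t ω‖^2 ∂μ
    rw [← integral_const_mul]
    exact integral_mono (hIntSt t) ((hIntDt t).const_mul _) hpath
  -- (P3)
  have hSt2 : ∀ t, q ∣ (t+1) → StI t ≤ 2*L^2*DtI t + 2*ErI t := by
    intro t hdv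
    have hpath : ∀ ω, ‖v (t+1) ω - v t ω‖^2 ≤
        2*L^2*‖x (t+1) ω - x t ω‖^2 + 2*‖v t ω - Gmap f (x t ω)‖^2 := by
      intro ω
      have hsplit : v (t+1) ω - v t ω
          = (Gmap f (x (t+1) ω) - Gmap f (x t ω)) + (Gmap f (x t ω) - v t ω) := by
        rw [hvfull (t+1) hdv ω]; abel
      have hG : ‖Gmap f (x (t+1) ω) - Gmap f (x t ω)‖^2 ≤ L^2 * ‖x (t+1) ω - x t ω‖^2 :=
        hstack_sq _ _ L hL (fun i => by
          simp only [PiLp.sub_apply, Gmap, PiLp.toLp_apply]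
          exact gradLoc_lip f hn L hdiff hlip i _ _)
      have h2 := aux_two (Gmap f (x (t+1) ω) - Gmap f (x t ω)) (Gmap f (x t ω) - v t ω)
      have h3 : ‖Gmap f (x t ω) - v t ω‖ = ‖v t ω - Gmap f (x t ω)‖ := norm_sub_rev _ _
      rw [hsplit]
      rw [h3] at h2
      linarith
    have hint2 : Integrable (fun ω => 2*L^2*‖x (t+1) ω - x t ω‖^2
        + 2*‖v t ω - Gmap f (x t ω)‖^2) μ :=
      ((hIntDt t).const_mul (2*L^2)).add ((hIntEr t).const_mul 2)
    have hmono := integral_mono (hIntSt t) hint2 hpath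
    rw [integral_add ((hIntDt t).const_mul (2*L^2)) ((hIntEr t).const_mul 2),
      integral_const_mul, integral_const_mul] at hmono
    exact hmono
  -- (P4)
  have hErStep : ∀ t, ¬ q ∣ (t+1) → ErI (t+1) ≤ ErI t + L^2 * DtI t := by
    intro t hndvd
    set Xx' : ({p // p ∈ pIdx S2 m t} → Fin n) → Stack m d :=
      fun h => Wact W ((F t h).1) - α • (F t h).2.2 with hXx'
    set gg : Fin m → Fin n → ({p // p ∈ pIdx S2 m t} → Fin n) → Vec d :=
      fun i j h => gradient (f i j) (Xx' h i) - gradient (f i j) ((F t h).1 i) with hgg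
    set gb : Fin m → ({p // p ∈ pIdx S2 m t} → Fin n) → Vec d :=
      fun i h => (n:ℝ)⁻¹ • ∑ j, gg i j h with hgbdef
    set Ax : ({p // p ∈ pIdx S2 m t} → Fin n) → Stack m d :=
      fun h => (F t h).2.1 - Gmap f ((F t h).1) with hAxdef
    have hx' : ∀ ω, x (t+1) ω = Xx' (tupJ J t ω) := by
      intro ω
      show x (t+1) ω = Wact W ((F t (tupJ J t ω)).1) - α • (F t (tupJ J t ω)).2.2
      rw [hxrec t ω, hFx t ω, hFy t ω]
    set ev : Ω → Stack m d :=
      fun ω => (WithLp.toLp 2 (fun i => (S2:ℝ)⁻¹ • ∑ b, (gg i (J (t+1) b i ω) (tupJ J t ω)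
        - gb i (tupJ J t ω))) : Stack m d) with hevdef
    have hgbG : ∀ (h : {p // p ∈ pIdx S2 m t} → Fin n) (i : Fin m),
        Gmap f (Xx' h) i - Gmap f ((F t h).1) i = gb i h := by
      intro h i
      show gradient (fLoc f i) (Xx' h i) - gradient (fLoc f i) ((F t h).1 i) = gb i h
      rw [gradLoc_eq f hdiff, gradLoc_eq f hdiff, ← smul_sub, ← Finset.sum_sub_distrib]
    have hsplit : ∀ ω, v (t+1) ω - Gmap f (x (t+1) ω) = Ax (tupJ J t ω) + ev ω := by
      intro ω
      refine PiLp.ext (fun i => ?_)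
      show v (t+1) ω i - Gmap f (x (t+1) ω) i = Ax (tupJ J t ω) i + ev ω i
      have hvv := hvest t hndvd ω i
      have hggJ : ∀ b : Fin S2, gradient (f i (J (t+1) b i ω)) (x (t+1) ω i)
          - gradient (f i (J (t+1) b i ω)) (x t ω i)
            = gg i (J (t+1) b i ω) (tupJ J t ω) := by
        intro b
        rw [hx' ω, hFx t ω]
      have heq1 : ev ω i = (S2:ℝ)⁻¹ • (∑ b, gg i (J (t+1) b i ω) (tupJ J t ω))
          - gb i (tupJ J t ω) := by
        show (S2:ℝ)⁻¹ • ∑ b, (gg i (J (t+1) b i ω) (tupJ J t ω) - gb i (tupJ J t ω)) = _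
        rw [Finset.sum_sub_distrib, smul_sub]
        congr 1
        have hsc : (∑ _b : Fin S2, gb i (tupJ J t ω)) = (S2:ℝ) • gb i (tupJ J t ω) := by
          simp [Finset.card_univ, ← Nat.cast_smul_eq_nsmul ℝ]
        rw [hsc, smul_smul, inv_mul_cancel₀ (ne_of_gt hS2'), one_smul]
      have heq2 : Gmap f (x (t+1) ω) i = Gmap f (x t ω) i + gb i (tupJ J t ω) := by
        rw [hx' ω, hFx t ω]
        exact sub_eq_iff_eq_add'.mp (hgbG (tupJ J t ω) i)
      have hAxi : Ax (tupJ J t ω) i = v t ω i - Gmap f (x t ω) i := by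
        show (F t (tupJ J t ω)).2.1 i - Gmap f ((F t (tupJ J t ω)).1) i = _
        rw [← hFv t ω, ← hFx t ω]
      rw [hvv, Finset.sum_congr rfl (fun b _ => hggJ b), hAxi, heq1, heq2]
      abel
    -- integrability of the error pieces
    have probe1 : ∀ ω, tupJ J t ω = (fun p => tupJ J (t+1) ω ⟨p.1, hsub t p.2⟩) := fun ω => rfl
    have probe2 : ∀ ω (b : Fin S2) (i : Fin m), J (t+1) b i ω = tupJ J (t+1) ω ⟨(t+1,b,i), hmemb t b i⟩ := fun ω b i => rfl
    set Ev : ({p // p ∈ pIdx S2 m (t+1)} → Fin n) → Stack m d :=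
      fun h => WithLp.toLp 2 (fun i => (S2:ℝ)⁻¹ • ∑ b, (gg i (h ⟨(t+1,b,i), hmemb t b i⟩)
        (fun p => h ⟨p.1, hsub t p.2⟩) - gb i (fun p => h ⟨p.1, hsub t p.2⟩))) with hEvdef
    have hevE : ∀ ω, ev ω = Ev (tupJ J (t+1) ω) := fun ω => rfl
    have hIntEv : Integrable (fun ω => ‖ev ω‖^2) μ :=
      (hIntFac (t+1) (fun h => ‖Ev h‖^2)).congr
        (Filter.Eventually.of_forall (fun ω =>
          congrArg (fun z : Stack m d => ‖z‖^2) (hevE ω).symm))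
    have hIntCross : Integrable (fun ω => (inner ℝ (Ax (tupJ J t ω)) (ev ω) : ℝ)) μ :=
      (hIntFac (t+1) (fun h => (inner ℝ (Ax (fun p => h ⟨p.1, hsub t p.2⟩)) (Ev h) : ℝ))).congr
        (Filter.Eventually.of_forall (fun ω => by
          beta_reduce
          rw [hevE ω, probe1 ω]))
    -- Claim 1 : cross term vanishes
    have hswitchuse : ∀ (b : Fin S2) (i : Fin m),
        (∫ ω, (inner ℝ (Ax (tupJ J t ω) i) (gg i (J (t+1) b i ω) (tupJ J t ω)
          - gb i (tupJ J t ω)) : ℝ) ∂μ) = 0 := by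
      intro b i
      calc (∫ ω, (inner ℝ (Ax (tupJ J t ω) i) (gg i (J (t+1) b i ω) (tupJ J t ω)
            - gb i (tupJ J t ω)) : ℝ) ∂μ)
          = ∫ ω, (n:ℝ)⁻¹ * ∑ j, (inner ℝ (Ax (tupJ J t ω) i)
              (gg i j (tupJ J t ω) - gb i (tupJ J t ω)) : ℝ) ∂μ :=
            switch_lemma μ J hn hJmeas hJunif hJindep t b i
              (fun j h => (inner ℝ (Ax h i) (gg i j h - gb i h) : ℝ))
        _ = ∫ (_ω : Ω), (0:ℝ) ∂μ := by
            refine integral_congr_ae (Filter.Eventually.of_forall (fun ω => ?_))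
            exact aux_center hn (Ax (tupJ J t ω) i) (fun j => gg i j (tupJ J t ω))
        _ = 0 := integral_zero _ _
    have hcross : (∫ ω, (inner ℝ (Ax (tupJ J t ω)) (ev ω) : ℝ) ∂μ) = 0 := by
      have hpt : ∀ ω, (inner ℝ (Ax (tupJ J t ω)) (ev ω) : ℝ)
          = (S2:ℝ)⁻¹ * ∑ i, ∑ b, (inner ℝ (Ax (tupJ J t ω) i)
            (gg i (J (t+1) b i ω) (tupJ J t ω) - gb i (tupJ J t ω)) : ℝ) := by
        intro ω
        rw [PiLp.inner_apply, Finset.mul_sum]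
        refine Finset.sum_congr rfl (fun i _ => ?_)
        show (inner ℝ (Ax (tupJ J t ω) i) (ev ω i) : ℝ) = _
        have hei : ev ω i = (S2:ℝ)⁻¹ • ∑ b, (gg i (J (t+1) b i ω) (tupJ J t ω)
            - gb i (tupJ J t ω)) := rfl
        rw [hei, real_inner_smul_right, inner_sum]
      have hIone : ∀ i : Fin m, Integrable (fun ω => ∑ b, (inner ℝ (Ax (tupJ J t ω) i)
          (gg i (J (t+1) b i ω) (tupJ J t ω) - gb i (tupJ J t ω)) : ℝ)) μ :=
        fun i => integrable_finset_sum _ (fun b _ => integrable_switch μ J hn hJmeas t b i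
          (fun j h => (inner ℝ (Ax h i) (gg i j h - gb i h) : ℝ)))
      have e1 : (∫ ω, ∑ i, ∑ b, (inner ℝ (Ax (tupJ J t ω) i)
          (gg i (J (t+1) b i ω) (tupJ J t ω) - gb i (tupJ J t ω)) : ℝ) ∂μ)
          = ∑ i, ∫ ω, ∑ b, (inner ℝ (Ax (tupJ J t ω) i)
            (gg i (J (t+1) b i ω) (tupJ J t ω) - gb i (tupJ J t ω)) : ℝ) ∂μ :=
        integral_finset_sum _ (fun i _ => hIone i)
      have e2 : ∀ i : Fin m, (∫ ω, ∑ b, (inner ℝ (Ax (tupJ J t ω) i)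
          (gg i (J (t+1) b i ω) (tupJ J t ω) - gb i (tupJ J t ω)) : ℝ) ∂μ)
          = ∑ b, ∫ ω, (inner ℝ (Ax (tupJ J t ω) i)
            (gg i (J (t+1) b i ω) (tupJ J t ω) - gb i (tupJ J t ω)) : ℝ) ∂μ :=
        fun i => integral_finset_sum _ (fun b _ => integrable_switch μ J hn hJmeas t b i
          (fun j h => (inner ℝ (Ax h i) (gg i j h - gb i h) : ℝ)))
      calc (∫ ω, (inner ℝ (Ax (tupJ J t ω)) (ev ω) : ℝ) ∂μ)
          = ∫ ω, (S2:ℝ)⁻¹ * ∑ i, ∑ b, (inner ℝ (Ax (tupJ J t ω) i)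
              (gg i (J (t+1) b i ω) (tupJ J t ω) - gb i (tupJ J t ω)) : ℝ) ∂μ :=
            integral_congr_ae (Filter.Eventually.of_forall hpt)
        _ = (S2:ℝ)⁻¹ * ∫ ω, ∑ i, ∑ b, (inner ℝ (Ax (tupJ J t ω) i)
              (gg i (J (t+1) b i ω) (tupJ J t ω) - gb i (tupJ J t ω)) : ℝ) ∂μ :=
            integral_const_mul _ _
        _ = (S2:ℝ)⁻¹ * ∑ i, ∑ b, ∫ ω, (inner ℝ (Ax (tupJ J t ω) i)
              (gg i (J (t+1) b i ω) (tupJ J t ω) - gb i (tupJ J t ω)) : ℝ) ∂μ := by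
            rw [e1, Finset.sum_congr rfl (fun i _ => e2 i)]
        _ = 0 := by
            rw [Finset.sum_congr rfl (fun i _ =>
              Finset.sum_congr rfl (fun b _ => hswitchuse b i))]
            simp
    -- Claim 2 : second moment of the error
    have hIntDtblock : ∀ i : Fin m, Integrable (fun ω => ‖x (t+1) ω i - x t ω i‖^2) μ := by
      intro i
      exact hIntOf t _ (fun h => ‖Xx' h i - (F t h).1 i‖^2)
        (fun ω => by rw [hx' ω, hFx t ω])
    have hDtblocks : (∑ i, ∫ ω, ‖x (t+1) ω i - x t ω i‖^2 ∂μ) = DtI t := by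
      show _ = ∫ ω, ‖x (t+1) ω - x t ω‖^2 ∂μ
      rw [← integral_finset_sum _ (fun i _ => hIntDtblock i)]
      refine integral_congr_ae (Filter.Eventually.of_forall (fun ω => ?_))
      simp only [stack_norm_sq, PiLp.sub_apply]
    have hper : ∀ (b : Fin S2) (i : Fin m),
        (∫ ω, ‖gg i (J (t+1) b i ω) (tupJ J t ω) - gb i (tupJ J t ω)‖^2 ∂μ)
          ≤ L^2 * ∫ ω, ‖x (t+1) ω i - x t ω i‖^2 ∂μ := by
      intro b i
      have h2 : ∀ ω, (n:ℝ)⁻¹ * ∑ j, ‖gg i j (tupJ J t ω) - gb i (tupJ J t ω)‖^2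
          ≤ L^2 * ‖x (t+1) ω i - x t ω i‖^2 := by
        intro ω
        have h3 := aux_var hn (fun j => gg i j (tupJ J t ω))
          (L * ‖Xx' (tupJ J t ω) i - (F t (tupJ J t ω)).1 i‖)
          (fun j => hlip i j _ _)
        rw [hx' ω, hFx t ω]
        calc (n:ℝ)⁻¹ * ∑ j, ‖gg i j (tupJ J t ω) - gb i (tupJ J t ω)‖^2
            ≤ (L * ‖Xx' (tupJ J t ω) i - (F t (tupJ J t ω)).1 i‖)^2 := h3
          _ = L^2 * ‖Xx' (tupJ J t ω) i - (F t (tupJ J t ω)).1 i‖^2 := by ring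
      have hIa : Integrable (fun ω => (n:ℝ)⁻¹ * ∑ j,
          ‖gg i j (tupJ J t ω) - gb i (tupJ J t ω)‖^2) μ :=
        hIntFac t (fun h => (n:ℝ)⁻¹ * ∑ j, ‖gg i j h - gb i h‖^2)
      have hIb : Integrable (fun ω => L^2 * ‖x (t+1) ω i - x t ω i‖^2) μ :=
        (hIntDtblock i).const_mul _
      calc (∫ ω, ‖gg i (J (t+1) b i ω) (tupJ J t ω) - gb i (tupJ J t ω)‖^2 ∂μ)
          = ∫ ω, (n:ℝ)⁻¹ * ∑ j, ‖gg i j (tupJ J t ω) - gb i (tupJ J t ω)‖^2 ∂μ :=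
            switch_lemma μ J hn hJmeas hJunif hJindep t b i
              (fun j h => ‖gg i j h - gb i h‖^2)
        _ ≤ ∫ ω, L^2 * ‖x (t+1) ω i - x t ω i‖^2 ∂μ := integral_mono hIa hIb h2
        _ = L^2 * ∫ ω, ‖x (t+1) ω i - x t ω i‖^2 ∂μ := integral_const_mul _ _
    have he2 : (∫ ω, ‖ev ω‖^2 ∂μ) ≤ L^2 * DtI t := by
      have hpt : ∀ ω, ‖ev ω‖^2 ≤ (S2:ℝ)⁻¹ * ∑ i, ∑ b,
          ‖gg i (J (t+1) b i ω) (tupJ J t ω) - gb i (tupJ J t ω)‖^2 := by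
        intro ω
        calc ‖ev ω‖^2 = ∑ i, ‖ev ω i‖^2 := stack_norm_sq _
          _ ≤ ∑ i, (S2:ℝ)⁻¹ * ∑ b, ‖gg i (J (t+1) b i ω) (tupJ J t ω)
              - gb i (tupJ J t ω)‖^2 :=
            Finset.sum_le_sum (fun i _ => aux_avg_sq
              (fun b => gg i (J (t+1) b i ω) (tupJ J t ω) - gb i (tupJ J t ω)))
          _ = (S2:ℝ)⁻¹ * ∑ i, ∑ b, ‖gg i (J (t+1) b i ω) (tupJ J t ω)
              - gb i (tupJ J t ω)‖^2 := by rw [Finset.mul_sum]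
      have hIntRHS : Integrable (fun ω => (S2:ℝ)⁻¹ * ∑ i, ∑ b,
          ‖gg i (J (t+1) b i ω) (tupJ J t ω) - gb i (tupJ J t ω)‖^2) μ := by
        refine hIntOf (t+1) _ (fun h => (S2:ℝ)⁻¹ * ∑ i, ∑ b,
          ‖gg i (h ⟨(t+1,b,i), hmemb t b i⟩) (fun p => h ⟨p.1, hsub t p.2⟩)
            - gb i (fun p => h ⟨p.1, hsub t p.2⟩)‖^2)
          (fun ω => by rw [probe1 ω]; exact rfl)
      have e1 : (∫ ω, ∑ i, ∑ b, ‖gg i (J (t+1) b i ω) (tupJ J t ω)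
          - gb i (tupJ J t ω)‖^2 ∂μ)
          = ∑ i, ∫ ω, ∑ b, ‖gg i (J (t+1) b i ω) (tupJ J t ω)
            - gb i (tupJ J t ω)‖^2 ∂μ :=
        integral_finset_sum _ (fun i _ => integrable_finset_sum _
          (fun b _ => integrable_switch μ J hn hJmeas t b i
            (fun j h => ‖gg i j h - gb i h‖^2)))
      have e2 : ∀ i : Fin m, (∫ ω, ∑ b, ‖gg i (J (t+1) b i ω) (tupJ J t ω)
          - gb i (tupJ J t ω)‖^2 ∂μ)
          = ∑ b, ∫ ω, ‖gg i (J (t+1) b i ω) (tupJ J t ω) - gb i (tupJ J t ω)‖^2 ∂μ :=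
        fun i => integral_finset_sum _ (fun b _ => integrable_switch μ J hn hJmeas t b i
          (fun j h => ‖gg i j h - gb i h‖^2))
      calc (∫ ω, ‖ev ω‖^2 ∂μ)
          ≤ ∫ ω, (S2:ℝ)⁻¹ * ∑ i, ∑ b, ‖gg i (J (t+1) b i ω) (tupJ J t ω)
              - gb i (tupJ J t ω)‖^2 ∂μ := integral_mono hIntEv hIntRHS hpt
        _ = (S2:ℝ)⁻¹ * ∫ ω, ∑ i, ∑ b, ‖gg i (J (t+1) b i ω) (tupJ J t ω)
              - gb i (tupJ J t ω)‖^2 ∂μ := integral_const_mul _ _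
        _ = (S2:ℝ)⁻¹ * ∑ i, ∑ b, ∫ ω, ‖gg i (J (t+1) b i ω) (tupJ J t ω)
              - gb i (tupJ J t ω)‖^2 ∂μ := by
            rw [e1, Finset.sum_congr rfl (fun i _ => e2 i)]
        _ ≤ (S2:ℝ)⁻¹ * ∑ i, ∑ _b : Fin S2,
              (L^2 * ∫ ω, ‖x (t+1) ω i - x t ω i‖^2 ∂μ) := by
            refine mul_le_mul_of_nonneg_left ?_ (by positivity)
            exact Finset.sum_le_sum (fun i _ => Finset.sum_le_sum (fun b _ => hper b i))
        _ = L^2 * DtI t := by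
            have hconst : ∀ i : Fin m, (∑ _b : Fin S2,
                (L^2 * ∫ ω, ‖x (t+1) ω i - x t ω i‖^2 ∂μ))
                = (S2:ℝ) * (L^2 * ∫ ω, ‖x (t+1) ω i - x t ω i‖^2 ∂μ) := by
              intro i
              simp only [Finset.sum_const, Finset.card_univ, Fintype.card_fin, nsmul_eq_mul]
            rw [Finset.sum_congr rfl (fun i _ => hconst i), ← Finset.mul_sum,
              ← Finset.mul_sum, ← hDtblocks]
            field_simp
    -- assemble
    have hIA : Integrable (fun ω => ‖Ax (tupJ J t ω)‖^2) μ :=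
      hIntFac t (fun h => ‖Ax h‖^2)
    have hIC2 : Integrable (fun ω =>
        2*(inner ℝ (Ax (tupJ J t ω)) (ev ω) : ℝ)) μ := hIntCross.const_mul 2
    have hptw : ∀ ω, ‖v (t+1) ω - Gmap f (x (t+1) ω)‖^2
        = ‖Ax (tupJ J t ω)‖^2 + 2*(inner ℝ (Ax (tupJ J t ω)) (ev ω) : ℝ) + ‖ev ω‖^2 := by
      intro ω
      rw [hsplit ω]
      exact norm_add_sq_real _ _
    have ea : (∫ ω, (‖Ax (tupJ J t ω)‖^2 + 2*(inner ℝ (Ax (tupJ J t ω)) (ev ω) : ℝ)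
        + ‖ev ω‖^2) ∂μ)
        = (∫ ω, (‖Ax (tupJ J t ω)‖^2 + 2*(inner ℝ (Ax (tupJ J t ω)) (ev ω) : ℝ)) ∂μ)
          + ∫ ω, ‖ev ω‖^2 ∂μ := integral_add (hIA.add hIC2) hIntEv
    have eb : (∫ ω, (‖Ax (tupJ J t ω)‖^2
        + 2*(inner ℝ (Ax (tupJ J t ω)) (ev ω) : ℝ)) ∂μ)
        = (∫ ω, ‖Ax (tupJ J t ω)‖^2 ∂μ)
          + ∫ ω, 2*(inner ℝ (Ax (tupJ J t ω)) (ev ω) : ℝ) ∂μ := integral_add hIA hIC2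
    have ec : (∫ ω, 2*(inner ℝ (Ax (tupJ J t ω)) (ev ω) : ℝ) ∂μ)
        = 2 * ∫ ω, (inner ℝ (Ax (tupJ J t ω)) (ev ω) : ℝ) ∂μ := integral_const_mul _ _
    have ed : (∫ ω, ‖Ax (tupJ J t ω)‖^2 ∂μ) = ErI t := by
      show _ = ∫ ω, ‖v t ω - Gmap f (x t ω)‖^2 ∂μ
      refine integral_congr_ae (Filter.Eventually.of_forall (fun ω => ?_))
      show ‖Ax (tupJ J t ω)‖^2 = ‖v t ω - Gmap f (x t ω)‖^2
      rw [hFv t ω, hFx t ω]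
    have hmain : ErI (t+1) = ErI t
        + 2 * (∫ ω, (inner ℝ (Ax (tupJ J t ω)) (ev ω) : ℝ) ∂μ) + ∫ ω, ‖ev ω‖^2 ∂μ := by
      show (∫ ω, ‖v (t+1) ω - Gmap f (x (t+1) ω)‖^2 ∂μ) = _
      calc (∫ ω, ‖v (t+1) ω - Gmap f (x (t+1) ω)‖^2 ∂μ)
          = ∫ ω, (‖Ax (tupJ J t ω)‖^2 + 2*(inner ℝ (Ax (tupJ J t ω)) (ev ω) : ℝ)
              + ‖ev ω‖^2) ∂μ := integral_congr_ae (Filter.Eventually.of_forall hptw)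
        _ = ErI t + 2 * (∫ ω, (inner ℝ (Ax (tupJ J t ω)) (ev ω) : ℝ) ∂μ)
              + ∫ ω, ‖ev ω‖^2 ∂μ := by rw [ea, eb, ec, ed]
    rw [hmain, hcross]
    have := he2
    linarith
  -- (P5) unrolled bound
  have hErBound : ∀ t, ErI t ≤ L^2 * ∑ s ∈ Finset.Ico (q*(t/q)) t, DtI s := by
    intro t
    induction t with
    | zero =>
      rw [hEr0 0 (dvd_zero q)]
      exact mul_nonneg (sq_nonneg L) (Finset.sum_nonneg fun s _ => hDtnn s)
    | succ t ih =>
      by_cases hdv : q ∣ (t+1)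
      · rw [hEr0 (t+1) hdv]
        exact mul_nonneg (sq_nonneg L) (Finset.sum_nonneg fun s _ => hDtnn s)
      · have hfloor : (t+1)/q = t/q := by
          rw [Nat.succ_div, if_neg hdv]
          rfl
        have hle : q*(t/q) ≤ t := by
          rw [mul_comm]; exact Nat.div_mul_le_self t q
        calc ErI (t+1) ≤ ErI t + L^2 * DtI t := hErStep t hdv
          _ ≤ (L^2 * ∑ s ∈ Finset.Ico (q*(t/q)) t, DtI s) + L^2 * DtI t := by
              linarith [ih]
          _ = L^2 * ∑ s ∈ Finset.Ico (q*((t+1)/q)) (t+1), DtI s := by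
              rw [hfloor, Finset.sum_Ico_succ_top hle, mul_add]
  -- (P6) double sum bound
  have hdouble : ∑ t ∈ (Finset.range (r+1)).filter (fun t => q ∣ (t+1)),
      (∑ s ∈ Finset.Ico (q*(t/q)) t, DtI s) ≤ ∑ t ∈ Finset.range (r+1), DtI t := by
    have hker : ∀ t ∈ (Finset.range (r+1)).filter (fun t => q ∣ (t+1)),
        ∀ s ∈ Finset.Ico (q*(t/q)) t, t + 1 = q*(s/q) + q := by
      intro t ht s hs
      rw [Finset.mem_filter] at ht
      obtain ⟨htr, hdv⟩ := ht
      rw [Finset.mem_Ico] at hs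
      obtain ⟨hs1, hs2⟩ := hs
      have htlt : t < q*(t/q) + q := by
        conv_lhs => rw [← Nat.div_add_mod t q]
        exact Nat.add_lt_add_left (Nat.mod_lt _ hq0) _
      have hsup : s < q*(t/q) + q := lt_trans hs2 htlt
      have hle : t/q ≤ s/q := (Nat.le_div_iff_mul_le hq0).mpr (by rw [mul_comm]; exact hs1)
      have hlt2 : s/q < t/q + 1 := by
        rw [Nat.div_lt_iff_lt_mul hq0]
        calc s < q*(t/q) + q := hsup
          _ = (t/q + 1)*q := by ring
      have hsq_eq : s/q = t/q := le_antisymm (Nat.lt_succ_iff.mp hlt2) hle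
      have hmod : t % q + 1 = q := by
        have h1 : t + 1 = q*(t/q) + (t % q + 1) := by
          conv_lhs => rw [← Nat.div_add_mod t q]
          rw [add_assoc]
        have hdvd2 : q ∣ (t % q + 1) := by
          have h2 : q ∣ q*(t/q) + (t % q + 1) := h1 ▸ hdv
          exact (Nat.dvd_add_right (dvd_mul_right q (t/q))).mp h2
        have hlt : t % q < q := Nat.mod_lt _ hq0
        have hge : q ≤ t % q + 1 := Nat.le_of_dvd (Nat.succ_pos _) hdvd2
        omega
      calc t + 1 = q*(t/q) + (t % q + 1) := by
            conv_lhs => rw [← Nat.div_add_mod t q]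
            rw [add_assoc]
        _ = q*(t/q) + q := by rw [hmod]
        _ = q*(s/q) + q := by rw [hsq_eq]
    have hdisj : Set.PairwiseDisjoint
        ↑((Finset.range (r+1)).filter (fun t => q ∣ (t+1)))
        (fun t => Finset.Ico (q*(t/q)) t) := by
      intro t1 ht1 t2 ht2 hne
      rw [Finset.mem_coe] at ht1 ht2
      rw [Function.onFun, Finset.disjoint_left]
      intro s hs1 hs2
      have e1 := hker t1 ht1 s hs1
      have e2 := hker t2 ht2 s hs2
      exact hne (by omega)
    have hsubset : ((Finset.range (r+1)).filter (fun t => q ∣ (t+1))).biUnion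
        (fun t => Finset.Ico (q*(t/q)) t) ⊆ Finset.range (r+1) := by
      intro s hs
      rw [Finset.mem_biUnion] at hs
      obtain ⟨t, ht, hst⟩ := hs
      rw [Finset.mem_filter, Finset.mem_range] at ht
      rw [Finset.mem_Ico] at hst
      exact Finset.mem_range.mpr (lt_trans hst.2 ht.1)
    calc ∑ t ∈ (Finset.range (r+1)).filter (fun t => q ∣ (t+1)),
          ∑ s ∈ Finset.Ico (q*(t/q)) t, DtI s
        = ∑ s ∈ ((Finset.range (r+1)).filter (fun t => q ∣ (t+1))).biUnion
            (fun t => Finset.Ico (q*(t/q)) t), DtI s := (Finset.sum_biUnion hdisj).symm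
      _ ≤ ∑ t ∈ Finset.range (r+1), DtI t :=
          Finset.sum_le_sum_of_subset_of_nonneg hsubset (fun i _ _ => hDtnn i)
  -- (P7) step bound
  have hDt_le : ∀ t, DtI t ≤ 12*XI t + 3*α^2*YI t + 3*α^2*ZI t := by
    intro t
    have hpath : ∀ ω, ‖x (t+1) ω - x t ω‖^2 ≤
        12*‖x t ω - oneVec (blockAvg (x t ω))‖^2 + 3*α^2*‖y t ω - oneVec (blockAvg (y t ω))‖^2
          + 3*α^2*‖(oneVec (blockAvg (y t ω)) : Stack m d)‖^2 := by
      intro ω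
      have h := delta_bound W η α hη0 hη1 hα hm hW1 hWcontract (x t ω) (y t ω)
      rw [hxrec t ω]
      exact h
    have hint2 : Integrable (fun ω => 12*‖x t ω - oneVec (blockAvg (x t ω))‖^2
        + 3*α^2*‖y t ω - oneVec (blockAvg (y t ω))‖^2
        + 3*α^2*‖(oneVec (blockAvg (y t ω)) : Stack m d)‖^2) μ :=
      (((hIntX t).const_mul 12).add ((hIntY t).const_mul (3*α^2))).add
        ((hIntZ t).const_mul (3*α^2))
    have hmono := integral_mono (hIntDt t) hint2 hpath
    have e1 : (∫ ω, (12*‖x t ω - oneVec (blockAvg (x t ω))‖^2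
        + 3*α^2*‖y t ω - oneVec (blockAvg (y t ω))‖^2
        + 3*α^2*‖(oneVec (blockAvg (y t ω)) : Stack m d)‖^2) ∂μ)
        = (∫ ω, (12*‖x t ω - oneVec (blockAvg (x t ω))‖^2
          + 3*α^2*‖y t ω - oneVec (blockAvg (y t ω))‖^2) ∂μ)
          + ∫ ω, 3*α^2*‖(oneVec (blockAvg (y t ω)) : Stack m d)‖^2 ∂μ :=
      integral_add (((hIntX t).const_mul 12).add ((hIntY t).const_mul (3*α^2)))
        ((hIntZ t).const_mul (3*α^2))
    have e2 : (∫ ω, (12*‖x t ω - oneVec (blockAvg (x t ω))‖^2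
        + 3*α^2*‖y t ω - oneVec (blockAvg (y t ω))‖^2) ∂μ)
        = (∫ ω, 12*‖x t ω - oneVec (blockAvg (x t ω))‖^2 ∂μ)
          + ∫ ω, 3*α^2*‖y t ω - oneVec (blockAvg (y t ω))‖^2 ∂μ :=
      integral_add ((hIntX t).const_mul 12) ((hIntY t).const_mul (3*α^2))
    have e3 : (∫ ω, 12*‖x t ω - oneVec (blockAvg (x t ω))‖^2 ∂μ) = 12 * XI t :=
      integral_const_mul _ _
    have e4 : (∫ ω, 3*α^2*‖y t ω - oneVec (blockAvg (y t ω))‖^2 ∂μ) = 3*α^2 * YI t :=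
      integral_const_mul _ _
    have e5 : (∫ ω, 3*α^2*‖(oneVec (blockAvg (y t ω)) : Stack m d)‖^2 ∂μ) = 3*α^2 * ZI t :=
      integral_const_mul _ _
    have : DtI t ≤ 12 * XI t + 3*α^2 * YI t + 3*α^2 * ZI t := by
      rw [← e3, ← e4, ← e5]
      calc DtI t ≤ _ := hmono
        _ = _ := by rw [e1, e2]
    linarith
  -- final assembly
  have hstep : ∀ t ∈ Finset.range (r+1),
      StI t ≤ 2*L^2*DtI t + 2*(if q ∣ (t+1) then ErI t else 0) := by
    intro t _
    by_cases hdv : q ∣ (t+1)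
    · rw [if_pos hdv]; linarith [hSt2 t hdv]
    · rw [if_neg hdv]
      have h1 := hSt1 t hdv
      have h2 : (0:ℝ) ≤ L^2 * DtI t := mul_nonneg (sq_nonneg L) (hDtnn t)
      linarith
  have hsum1 : ∑ t ∈ Finset.range (r+1), StI t
      ≤ 2*L^2*(∑ t ∈ Finset.range (r+1), DtI t)
        + 2*(∑ t ∈ (Finset.range (r+1)).filter (fun t => q ∣ (t+1)), ErI t) := by
    calc ∑ t ∈ Finset.range (r+1), StI t
        ≤ ∑ t ∈ Finset.range (r+1), (2*L^2*DtI t + 2*(if q ∣ (t+1) then ErI t else 0)) :=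
          Finset.sum_le_sum hstep
      _ = 2*L^2*(∑ t ∈ Finset.range (r+1), DtI t)
          + 2*(∑ t ∈ Finset.range (r+1), (if q ∣ (t+1) then ErI t else 0)) := by
          rw [Finset.sum_add_distrib, ← Finset.mul_sum, ← Finset.mul_sum]
      _ = 2*L^2*(∑ t ∈ Finset.range (r+1), DtI t)
          + 2*(∑ t ∈ (Finset.range (r+1)).filter (fun t => q ∣ (t+1)), ErI t) := by
          rw [Finset.sum_filter]
  have hsum2 : ∑ t ∈ (Finset.range (r+1)).filter (fun t => q ∣ (t+1)), ErI t
      ≤ L^2 * ∑ t ∈ Finset.range (r+1), DtI t := by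
    calc ∑ t ∈ (Finset.range (r+1)).filter (fun t => q ∣ (t+1)), ErI t
        ≤ ∑ t ∈ (Finset.range (r+1)).filter (fun t => q ∣ (t+1)),
            (L^2 * ∑ s ∈ Finset.Ico (q*(t/q)) t, DtI s) :=
          Finset.sum_le_sum (fun t _ => hErBound t)
      _ = L^2 * ∑ t ∈ (Finset.range (r+1)).filter (fun t => q ∣ (t+1)),
            ∑ s ∈ Finset.Ico (q*(t/q)) t, DtI s := by rw [← Finset.mul_sum]
      _ ≤ L^2 * ∑ t ∈ Finset.range (r+1), DtI t :=
          mul_le_mul_of_nonneg_left hdouble (sq_nonneg L)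
  have hsum3 : ∑ t ∈ Finset.range (r+1), DtI t
      ≤ 12*(∑ t ∈ Finset.range (r+1), XI t) + 3*α^2*(∑ t ∈ Finset.range (r+1), YI t)
        + 3*α^2*(∑ t ∈ Finset.range (r+1), ZI t) := by
    calc ∑ t ∈ Finset.range (r+1), DtI t
        ≤ ∑ t ∈ Finset.range (r+1), (12*XI t + 3*α^2*YI t + 3*α^2*ZI t) :=
          Finset.sum_le_sum (fun t _ => hDt_le t)
      _ = 12*(∑ t ∈ Finset.range (r+1), XI t) + 3*α^2*(∑ t ∈ Finset.range (r+1), YI t)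
          + 3*α^2*(∑ t ∈ Finset.range (r+1), ZI t) := by
          rw [Finset.sum_add_distrib, Finset.sum_add_distrib,
            ← Finset.mul_sum, ← Finset.mul_sum, ← Finset.mul_sum]
  have hDtSnn : (0:ℝ) ≤ ∑ t ∈ Finset.range (r+1), DtI t :=
    Finset.sum_nonneg (fun t _ => hDtnn t)
  have hXS : (0:ℝ) ≤ ∑ t ∈ Finset.range (r+1), XI t := Finset.sum_nonneg (fun t _ => hXnn t)
  have hYS : (0:ℝ) ≤ ∑ t ∈ Finset.range (r+1), YI t := Finset.sum_nonneg (fun t _ => hYnn t)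
  have hZS : (0:ℝ) ≤ ∑ t ∈ Finset.range (r+1), ZI t := Finset.sum_nonneg (fun t _ => hZnn t)
  have hSDt : ∑ t ∈ Finset.range (r+1), StI t ≤ 4*L^2*(∑ t ∈ Finset.range (r+1), DtI t) := by
    linarith
  have hfin : 4*L^2*(∑ t ∈ Finset.range (r+1), DtI t)
      ≤ 4*L^2*(12*(∑ t ∈ Finset.range (r+1), XI t)
        + 3*α^2*(∑ t ∈ Finset.range (r+1), YI t)
        + 3*α^2*(∑ t ∈ Finset.range (r+1), ZI t)) :=
    mul_le_mul_of_nonneg_left hsum3 (by positivity)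
  have hY2 : (0:ℝ) ≤ L^2*(α^2*(∑ t ∈ Finset.range (r+1), YI t)) :=
    mul_nonneg (sq_nonneg L) (mul_nonneg (sq_nonneg α) hYS)
  have hZ2 : (0:ℝ) ≤ L^2*(α^2*(∑ t ∈ Finset.range (r+1), ZI t)) :=
    mul_nonneg (sq_nonneg L) (mul_nonneg (sq_nonneg α) hZS)
  have hε : (0:ℝ) ≤ 6*((r:ℝ)+1)*ε₂ := by positivity
  calc ∑ t ∈ Finset.range (r+1), StI t
      ≤ 4*L^2*(12*(∑ t ∈ Finset.range (r+1), XI t)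
        + 3*α^2*(∑ t ∈ Finset.range (r+1), YI t)
        + 3*α^2*(∑ t ∈ Finset.range (r+1), ZI t)) := le_trans hSDt hfin
    _ ≤ 24*L^2*(2*(∑ t ∈ Finset.range (r+1), XI t)
        + α^2*(∑ t ∈ Finset.range (r+1), YI t)
        + α^2*(∑ t ∈ Finset.range (r+1), ZI t)) + 6*((r:ℝ)+1)*ε₂ := by nlinarith
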